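/- Let (h, e, f) be an sl₂-triple of matrices in Matₘ(ℂ). Then for every B ∈ Matₘ(ℂ) and all natural numbers k ≥ 1 and ℓ ≥ 1, one has tr((f^k·B − B·f^k)·(f^(ℓ−1)·e − e·f^(ℓ−1))) = 2(ℓ−1)·k·tr(B·f^(k+ℓ−2)). -/
import Mathlib


open Matrix

/-- `(h, e, f)` is an `sl₂`-triple of matrices: `⁅h,e⁆ = 2e`, `⁅h,f⁆ = -2f`, `⁅e,f⁆ = h`. -/
def IsSl2TripleM {m : ℕ} (h e f : Matrix (Fin m) (Fin m) ℂ) : Prop :=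
  h * e - e * h = (2 : ℂ) • e ∧ h * f - f * h = (-2 : ℂ) • f ∧ e * f - f * e = h

private lemma pow_mul_h {m : ℕ} (h e f : Matrix (Fin m) (Fin m) ℂ)
    (hT : IsSl2TripleM h e f) (n : ℕ) :
    f ^ n * h = h * f ^ n + (2 * (n : ℂ)) • f ^ n := by
  induction n with
  | zero => simp
  | succ n ih =>
    have hfh : f * h = h * f + (2 : ℂ) • f := by
      have := hT.2.1
      rw [sub_eq_iff_eq_add] at this
      rw [this]; module
    have hc : ((n + 1 : ℕ) : ℂ) = (n : ℂ) + 1 := by push_cast; ring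
    calc f ^ (n + 1) * h = f * (f ^ n * h) := by rw [pow_succ', mul_assoc]
      _ = f * (h * f ^ n) + (2 * (n : ℂ)) • (f * f ^ n) := by
          rw [ih, mul_add, mul_smul_comm]
      _ = (f * h) * f ^ n + (2 * (n : ℂ)) • f ^ (n + 1) := by
          rw [mul_assoc, ← pow_succ']
      _ = h * f ^ (n + 1) + (2 * ((n : ℂ) + 1)) • f ^ (n + 1) := by
          rw [hfh, add_mul, smul_mul_assoc, mul_assoc, ← pow_succ']; module
      _ = h * f ^ (n + 1) + (2 * ((n + 1 : ℕ) : ℂ)) • f ^ (n + 1) := by rw [hc]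

private lemma e_mul_pow {m : ℕ} (h e f : Matrix (Fin m) (Fin m) ℂ)
    (hT : IsSl2TripleM h e f) (n : ℕ) :
    e * f ^ (n + 1) = f ^ (n + 1) * e + (((n : ℂ) + 1)) • (h * f ^ n)
      + (((n : ℂ) + 1) * n) • f ^ n := by
  induction n with
  | zero =>
    have := hT.2.2
    rw [sub_eq_iff_eq_add] at this
    simp [this]
    exact add_comm _ _
  | succ n ih =>
    have hef : e * f = f * e + h := by
      have := hT.2.2; rw [sub_eq_iff_eq_add] at this; rw [this]; exact add_comm _ _
    have hfh := pow_mul_h h e f hT (n + 1)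
    have hc : ((n + 1 : ℕ) : ℂ) = (n : ℂ) + 1 := by push_cast; ring
    calc e * f ^ (n + 2) = (e * f ^ (n + 1)) * f := by rw [pow_succ, mul_assoc]
      _ = (f ^ (n + 1) * e + (((n : ℂ) + 1)) • (h * f ^ n)
            + (((n : ℂ) + 1) * n) • f ^ n) * f := by rw [ih]
      _ = f ^ (n + 1) * (e * f) + (((n : ℂ) + 1)) • (h * (f ^ n * f))
            + (((n : ℂ) + 1) * n) • (f ^ n * f) := by
          rw [add_mul, add_mul, smul_mul_assoc, smul_mul_assoc, mul_assoc, mul_assoc]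
      _ = f ^ (n + 1) * (f * e + h) + (((n : ℂ) + 1)) • (h * f ^ (n + 1))
            + (((n : ℂ) + 1) * n) • f ^ (n + 1) := by rw [hef, ← pow_succ]
      _ = f ^ (n + 2) * e + f ^ (n + 1) * h + (((n : ℂ) + 1)) • (h * f ^ (n + 1))
            + (((n : ℂ) + 1) * n) • f ^ (n + 1) := by
          rw [mul_add, ← mul_assoc, ← pow_succ]
      _ = f ^ (n + 2) * e + (((n : ℂ) + 1 + 1)) • (h * f ^ (n + 1))
            + (((n : ℂ) + 1 + 1) * ((n : ℂ) + 1)) • f ^ (n + 1) := by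
          rw [hfh, hc]; module
      _ = _ := by rw [hc]

set_option maxHeartbeats 1000000 in
/-- The trace identity `tr(⁅f^k, B⁆ ⁅f^(ℓ-1), e⁆) = 2(ℓ-1)k · tr(B f^(k+ℓ-2))` for an
`sl₂`-triple `(h, e, f)` of matrices. -/
theorem trace_identity_sl2
    {m : ℕ} (h e f : Matrix (Fin m) (Fin m) ℂ) (hT : IsSl2TripleM h e f)
    (B : Matrix (Fin m) (Fin m) ℂ) (k ℓ : ℕ) (hk : 1 ≤ k) (hℓ : 1 ≤ ℓ) :
    ((f ^ k * B - B * f ^ k) * (f ^ (ℓ - 1) * e - e * f ^ (ℓ - 1))).trace =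
      ((2 * (ℓ - 1) * k : ℕ) : ℂ) * (B * f ^ (k + ℓ - 2)).trace := by
  rcases Nat.lt_or_ge ℓ 2 with hl2 | hl2
  · -- ℓ = 1
    interval_cases ℓ
    simp
  · obtain ⟨j, rfl⟩ : ∃ j, ℓ = j + 2 := ⟨ℓ - 2, by omega⟩
    have hsub1 : j + 2 - 1 = j + 1 := rfl
    have hsub2 : k + (j + 2) - 2 = k + j := by omega
    rw [hsub1, hsub2]
    have hcomm := e_mul_pow h e f hT j
    have key : f ^ (j + 1) * e - e * f ^ (j + 1)
        = -((((j : ℂ) + 1)) • (h * f ^ j)) - ((((j : ℂ) + 1) * j) • f ^ j) := by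
      rw [hcomm]; module
    rw [key]
    have hfh := pow_mul_h h e f hT k
    have hpow : f ^ k * f ^ j = f ^ (k + j) := (pow_add f k j).symm
    have hpow' : f ^ j * f ^ k = f ^ (k + j) := by rw [← pow_add, Nat.add_comm]
    have t1 : ((f ^ k * B - B * f ^ k) * (h * f ^ j)).trace
        = -(2 * (k : ℂ)) * (B * f ^ (k + j)).trace := by
      have e1 : (f ^ k * B - B * f ^ k) * (h * f ^ j)
          = f ^ k * (B * (h * f ^ j)) - B * ((f ^ k * h) * f ^ j) := by
        rw [sub_mul, mul_assoc, mul_assoc, ← mul_assoc (f ^ k) h]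
      rw [e1, trace_sub, trace_mul_comm (f ^ k) (B * (h * f ^ j)), hfh]
      have e2 : B * (h * f ^ j) * f ^ k = B * (h * f ^ (k + j)) := by
        rw [mul_assoc, mul_assoc, hpow']
      have e3 : B * ((h * f ^ k + (2 * (k : ℂ)) • f ^ k) * f ^ j)
          = B * (h * f ^ (k + j)) + (2 * (k : ℂ)) • (B * f ^ (k + j)) := by
        rw [add_mul, smul_mul_assoc, mul_assoc h, hpow, mul_add, mul_smul_comm]
      rw [e2, e3, trace_add, trace_smul, smul_eq_mul]
      ring
    have t2 : ((f ^ k * B - B * f ^ k) * f ^ j).trace = 0 := by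
      have e1 : (f ^ k * B - B * f ^ k) * f ^ j
          = f ^ k * (B * f ^ j) - B * f ^ (k + j) := by
        rw [sub_mul, mul_assoc, mul_assoc, hpow]
      rw [e1, trace_sub, trace_mul_comm (f ^ k) (B * f ^ j), mul_assoc, hpow', sub_self]
    have expand : (f ^ k * B - B * f ^ k) *
        (-((((j : ℂ) + 1)) • (h * f ^ j)) - ((((j : ℂ) + 1) * j) • f ^ j))
        = (-((j : ℂ) + 1)) • ((f ^ k * B - B * f ^ k) * (h * f ^ j))
          + (-(((j : ℂ) + 1) * j)) • ((f ^ k * B - B * f ^ k) * f ^ j) := by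
      rw [mul_sub, mul_neg, mul_smul_comm, mul_smul_comm]
      module
    rw [expand, trace_add, trace_smul, trace_smul, t1, t2, smul_eq_mul, smul_eq_mul]
    push_cast
    ring
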